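/- Let f(p) = |p|^k be the radial k-homogeneous density on ℝ^{n+1} \ {0}, and let Σ be a round sphere of radius r centered at p₀ with |p₀| = r (so 0 ∈ Σ), with unit normal N(p) = (p₀ − p)/r. Then the f-mean curvature H_f(p) = n/r − k⟨p, N(p)⟩/|p|² is constant equal to (2n+k)/(2r) for every p ∈ Σ with p ≠ 0. -/
import Mathlib


open Real

local notation "⟪" x ", " y "⟫" => @inner ℝ _ _ x y

/-- For the radial density `f(p) = |p|^k` on `ℝ^{n+1} \ {0}` and a sphere of
radius `r` centered at `p₀` with `|p₀| = r` (so that `0` lies on the sphere),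
with unit normal `N(p) = (p₀ − p)/r`, the `f`-mean curvature
`H_f(p) = n/r − k⟨p, N(p)⟩/|p|²` is constant equal to `(2n+k)/(2r)` at every
point `p ≠ 0` of the sphere. -/
theorem f_mean_curvature_sphere_through_origin (n : ℕ) (k r : ℝ) (hr : 0 < r)
    (p₀ : EuclideanSpace ℝ (Fin (n + 1))) (hp₀ : ‖p₀‖ = r) :
    ∀ p : EuclideanSpace ℝ (Fin (n + 1)), ‖p - p₀‖ = r → p ≠ 0 →
      (n : ℝ) / r - k * ⟪p, r⁻¹ • (p₀ - p)⟫ / ‖p‖ ^ 2 = (2 * (n : ℝ) + k) / (2 * r) := by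
  intro p hp hp0
  have hsq : ‖p - p₀‖ ^ 2 = r ^ 2 := by rw [hp]
  rw [@norm_sub_sq_real] at hsq
  have hip : ⟪p, p₀⟫ = ‖p‖ ^ 2 / 2 := by
    rw [hp₀] at hsq; nlinarith [hsq]
  have hinner : ⟪p, r⁻¹ • (p₀ - p)⟫ = r⁻¹ * (-(‖p‖ ^ 2) / 2) := by
    rw [inner_smul_right, inner_sub_right, hip, real_inner_self_eq_norm_sq]
    ring
  have hpn : ‖p‖ ^ 2 ≠ 0 := pow_ne_zero _ (norm_ne_zero_iff.mpr hp0)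
  rw [hinner]
  field_simp
  ring
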